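/- Let G be the group of bijections of ℝ³ generated by τ₀(x⁰,x¹,x²) = (x⁰−1, x¹, x²), τ₁(x⁰,x¹,x²) = (x⁰, x¹−1, x²), τ₂(x⁰,x¹,x²) = (x⁰, x¹ + n₀x⁰, x²−1). Then the abelianization of G has a subgroup isomorphic to ℤ ⊕ ℤ; equivalently the rank of G/[G,G] is at least 2. -/

import Mathlib

/-- The translation `(x⁰, x¹, x²) ↦ (x⁰ − 1, x¹, x²)`. -/
def tau0 : Equiv.Perm (ℝ × ℝ × ℝ) where
  toFun x := (x.1 - 1, x.2.1, x.2.2)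
  invFun x := (x.1 + 1, x.2.1, x.2.2)
  left_inv x := by simp
  right_inv x := by simp

/-- The translation `(x⁰, x¹, x²) ↦ (x⁰, x¹ − 1, x²)`. -/
def tau1 : Equiv.Perm (ℝ × ℝ × ℝ) where
  toFun x := (x.1, x.2.1 - 1, x.2.2)
  invFun x := (x.1, x.2.1 + 1, x.2.2)
  left_inv x := by simp
  right_inv x := by simp

/-- The affine map `(x⁰, x¹, x²) ↦ (x⁰, x¹ + n₀ x⁰, x² − 1)`. -/
def tau2 (n₀ : ℤ) : Equiv.Perm (ℝ × ℝ × ℝ) where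
  toFun x := (x.1, x.2.1 + (n₀ : ℝ) * x.1, x.2.2 - 1)
  invFun x := (x.1, x.2.1 - (n₀ : ℝ) * x.1, x.2.2 + 1)
  left_inv x := by simp
  right_inv x := by simp

/-- Permutations that act as a translation on the coordinates `(x⁰, x²)`. -/
def transSub : Subgroup (Equiv.Perm (ℝ × ℝ × ℝ)) where
  carrier := {g | ∃ v : ℝ × ℝ, ∀ x, (g x).1 = x.1 + v.1 ∧ (g x).2.2 = x.2.2 + v.2}
  one_mem' := ⟨(0, 0), by simp⟩
  mul_mem' := by
    rintro g h ⟨v, hv⟩ ⟨w, hw⟩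
    refine ⟨(w.1 + v.1, w.2 + v.2), fun x => ?_⟩
    have h1 := hv (h x)
    have h2 := hw x
    simp only [Equiv.Perm.mul_apply]
    constructor <;> [rw [h1.1, h2.1]; rw [h1.2, h2.2]] <;> ring
  inv_mem' := by
    rintro g ⟨v, hv⟩
    refine ⟨(-v.1, -v.2), fun x => ?_⟩
    have h1 := hv (g⁻¹ x)
    simp only [← Equiv.Perm.mul_apply, mul_inv_cancel, Equiv.Perm.one_apply] at h1
    constructor <;> [rw [h1.1]; rw [h1.2]] <;> ring

/-- The translation vector, as a homomorphism. -/
noncomputable def transVec : transSub →* Multiplicative (ℝ × ℝ) where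
  toFun g := Multiplicative.ofAdd ((g.1 (0, 0, 0)).1, (g.1 (0, 0, 0)).2.2)
  map_one' := by simp
  map_mul' := by
    rintro ⟨g, v, hv⟩ ⟨h, w, hw⟩
    have h1 := hv (h (0, 0, 0))
    have h2 := hw (0, 0, 0)
    have h3 := hv (0, 0, 0)
    apply Multiplicative.toAdd.injective
    ext
    · simp only [MulMemClass.mk_mul_mk, Subgroup.coe_mul, Equiv.Perm.mul_apply, toAdd_mul, toAdd_ofAdd, Prod.fst_add] at *
      rw [h1.1, h2.1, h3.1]; ring
    · simp only [MulMemClass.mk_mul_mk, Subgroup.coe_mul, Equiv.Perm.mul_apply, toAdd_mul, toAdd_ofAdd, Prod.snd_add] at *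
      rw [h1.2, h2.2, h3.2]; ring

theorem closure_le_transSub (n₀ : ℤ) :
    Subgroup.closure {tau0, tau1, tau2 n₀} ≤ transSub := by
  rw [Subgroup.closure_le]
  rintro g (rfl | rfl | rfl)
  · exact ⟨(-1, 0), fun x => by simp [tau0]; ring⟩
  · exact ⟨(0, 0), fun x => by simp [tau1]⟩
  · exact ⟨(0, -1), fun x => by simp [tau2]; ring⟩

theorem abelianization_contains_Z2 (n₀ : ℤ) :
    ∃ φ : Multiplicative (ℤ × ℤ) →*
      Abelianization ↥(Subgroup.closure {tau0, tau1, tau2 n₀} :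
        Subgroup (Equiv.Perm (ℝ × ℝ × ℝ))),
      Function.Injective φ := by
  set G := Subgroup.closure {tau0, tau1, tau2 n₀} with hG
  have h0 : tau0 ∈ G := Subgroup.subset_closure (by simp)
  have h2 : tau2 n₀ ∈ G := Subgroup.subset_closure (by simp)
  set a : Abelianization G := Abelianization.of ⟨tau0, h0⟩ with ha
  set b : Abelianization G := Abelianization.of ⟨tau2 n₀, h2⟩ with hb
  set ψ : ↥G →* Multiplicative (ℝ × ℝ) :=
    transVec.comp (Subgroup.inclusion (closure_le_transSub n₀)) with hψ
  set Ψ : Abelianization ↥G →* Multiplicative (ℝ × ℝ) := Abelianization.lift ψ with hΨ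
  have hΨa : Ψ a = Multiplicative.ofAdd (-1, 0) := by
    simp [ha, hΨ, hψ, transVec, Subgroup.inclusion, tau0]
    change Multiplicative.ofAdd (_, _) = _
    norm_num
  have hΨb : Ψ b = Multiplicative.ofAdd (0, -1) := by
    simp [hb, hΨ, hψ, transVec, Subgroup.inclusion, tau2]
    change Multiplicative.ofAdd (_, _) = _
    norm_num
  refine ⟨{ toFun := fun p => a ^ p.toAdd.1 * b ^ p.toAdd.2
            map_one' := by simp
            map_mul' := fun p q => by
              simp only [toAdd_mul, Prod.fst_add, Prod.snd_add, zpow_add]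
              exact mul_mul_mul_comm _ _ _ _ }, ?_⟩
  intro p q hpq
  simp only [MonoidHom.coe_mk, OneHom.coe_mk] at hpq
  have h := congrArg Ψ hpq
  simp only [map_mul, map_zpow, hΨa, hΨb] at h
  have h' := congrArg Multiplicative.toAdd h
  simp only [toAdd_mul, toAdd_zpow, toAdd_ofAdd, Prod.smul_mk, smul_eq_mul,
    Prod.mk_add_mk, mul_zero, mul_neg, mul_one, zero_add, add_zero, Prod.mk.injEq,
    neg_inj, zsmul_eq_mul] at h'
  have e1 : p.toAdd.1 = q.toAdd.1 := by exact_mod_cast h'.1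
  have e2 : p.toAdd.2 = q.toAdd.2 := by exact_mod_cast h'.2
  apply Multiplicative.toAdd.injective
  exact Prod.ext e1 e2
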